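/- For any two pseudo-differential operators D_1, D_2 in one variable x, the identity Res_k((e^{−kx} D_1)(D_2 e^{kx})) = Res_{∂_x}(D_2 D_1) holds, where Res_k extracts the coefficient of k^{-1} in the resulting formal series in k, the left action of ∂_x on e^{-kx} is formal adjoint (so (e^{-kx})∂_x = -∂_x(e^{-kx}) = k e^{-kx}), and Res_{∂_x} extracts the coefficient of ∂_x^{-1}. -/

import Mathlib

open scoped BigOperators

/-- The generalized binomial coefficient `C(m,j) = m(m−1)⋯(m−j+1)/j!` for `m ∈ ℤ`. -/
noncomputable def genBinom (m : ℤ) (j : ℕ) : ℂ :=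
  (∏ t ∈ Finset.range j, ((m : ℤ) - (t : ℤ) : ℂ)) / (Nat.factorial j : ℂ)

/-- Product of pseudo-differential operators (coefficients of `∂ₓ^i`, `i ∈ ℤ`), given by
the generalized Leibniz rule. -/
noncomputable def pdoMul (P Q : ℤ → ℂ → ℂ) : ℤ → ℂ → ℂ :=
  fun i x => ∑ᶠ (m : ℤ), ∑ᶠ (j : ℕ),
    genBinom m j * P m x * iteratedDeriv j (Q (i - m + j)) x

/-- The coefficient of `k^m` in `e^{kx}·((e^{-kx})P)`, where the operator `P` acts on
`e^{-kx}` from the left via the formal adjoint action, so `(e^{-kx})∂ₓ = k e^{-kx}`: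
explicitly `(e^{-kx})(b_i ∂ₓ^i) = Σ_j C(i,j) k^{i-j} (−1)^j b_i^{(j)} e^{-kx}`. -/
noncomputable def leftSym (P : ℤ → ℂ → ℂ) : ℤ → ℂ → ℂ :=
  fun m x => ∑ᶠ (j : ℕ),
    genBinom (m + j) j * (-1 : ℂ) ^ j * iteratedDeriv j (P (m + j)) x

lemma iteratedDeriv_zero_fun' (n : ℕ) : iteratedDeriv n (0 : ℂ → ℂ) = 0 := by
  induction n with
  | zero => simp [iteratedDeriv_zero]
  | succ n ih => rw [iteratedDeriv_succ, ih]; ext x; exact deriv_const x 0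

lemma genBinom_neg (m : ℤ) (j : ℕ) :
    genBinom (-1 - m) j = (-1 : ℂ)^j * genBinom (m + j) j := by
  unfold genBinom
  rw [← mul_div_assoc]
  congr 1
  have key : ∏ t ∈ Finset.range j, (((m + j : ℤ) : ℂ) - t) =
      ∏ t ∈ Finset.range j, ((m : ℂ) + 1 + t) := by
    rw [← Finset.prod_range_reflect (fun t => ((m : ℂ) + 1 + t)) j]
    apply Finset.prod_congr rfl
    intro t ht
    rw [Finset.mem_range] at ht
    have h1 : ((j - 1 - t : ℕ) : ℂ) = (j : ℂ) - 1 - t := by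
      have h2 : j - 1 - t = j - (1 + t) := by omega
      rw [h2, Nat.cast_sub (by omega)]
      push_cast; ring
    simp only [h1]
    push_cast; ring
  calc ∏ t ∈ Finset.range j, (((-1 - m : ℤ) : ℂ) - t)
      = ∏ t ∈ Finset.range j, (-1 : ℂ) * ((m : ℂ) + 1 + t) := by
        apply Finset.prod_congr rfl; intro t _; push_cast; ring
    _ = (-1 : ℂ)^j * ∏ t ∈ Finset.range j, ((m : ℂ) + 1 + t) := by
        rw [Finset.prod_mul_distrib, Finset.prod_const, Finset.card_range]
    _ = (-1 : ℂ)^j * ∏ t ∈ Finset.range j, (((m + j : ℤ) : ℂ) - t) := by rw [key]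

/-- For any two pseudo-differential operators `D₁, D₂`,
`Res_k((e^{−kx}D₁)(D₂e^{kx})) = Res_{∂ₓ}(D₂D₁)`: the coefficient of `k^{-1}` in the
product of the formal series `e^{-kx}D₁` and `D₂e^{kx}` (whose `k^l` coefficient is
`D₂ l`) equals the coefficient of `∂ₓ^{-1}` in the operator product `D₂D₁`. -/
theorem residue_pairing
    (D1 D2 : ℤ → ℂ → ℂ)
    (hD1 : ∀ i, ContDiff ℂ ⊤ (D1 i)) (hD2 : ∀ i, ContDiff ℂ ⊤ (D2 i))
    (N1 N2 : ℤ)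
    (hN1 : ∀ i : ℤ, N1 < i → D1 i = 0) (hN2 : ∀ i : ℤ, N2 < i → D2 i = 0) :
    ∀ x : ℂ, (∑ᶠ m : ℤ, leftSym D1 m x * D2 (-1 - m) x) = pdoMul D2 D1 (-1) x := by
  intro x
  have hD1z : ∀ (i : ℤ) (j : ℕ), N1 < i → iteratedDeriv j (D1 i) x = 0 := by
    intro i j hi
    rw [hN1 i hi, iteratedDeriv_zero_fun']
    rfl
  show _ = ∑ᶠ (m' : ℤ), ∑ᶠ (j : ℕ),
      genBinom m' j * D2 m' x * iteratedDeriv j (D1 (-1 - m' + j)) x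
  rw [← finsum_comp_equiv (Equiv.subLeft (-1 : ℤ))
    (f := fun m' => ∑ᶠ (j : ℕ),
      genBinom m' j * D2 m' x * iteratedDeriv j (D1 (-1 - m' + j)) x)]
  apply finsum_congr
  intro m
  have hsupp : (Function.support fun j : ℕ =>
      genBinom (m + j) j * (-1 : ℂ)^j * iteratedDeriv j (D1 (m + j)) x).Finite := by
    apply Set.Finite.subset (Set.finite_Iic (N1 - m).toNat)
    intro j hj
    rw [Function.mem_support] at hj
    by_contra h
    rw [Set.mem_Iic, not_le] at h
    exact hj (by rw [hD1z (m + j) j (by omega)]; ring)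
  simp only [leftSym, Equiv.subLeft_apply]
  rw [finsum_mul _ _]
  apply finsum_congr
  intro j
  have harg : (-1 : ℤ) - (-1 - m) + j = m + j := by ring
  rw [harg, genBinom_neg]
  ring
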